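/- arXiv:2312.17572 — 2 statements merged into one kernel-verified Lean document; each statement's English description precedes it below -/
import Mathlib

section
/- Let ω^0,…,ω^N and ω̃^0,…,ω̃^N be weights in [ω_*, ω^*] with 0 < ω_* ≤ ω^*, set ε = ω_*/ω^*, and let C ⊆ {i ∈ {0,…,N} : ω^i = ω̃^i}. If (I, Ĩ) is a maximal coupling of the two corresponding categorical distributions (so P(I = Ĩ = i) = min(w^i, w̃^i) with normalised probabilities w^i, w̃^i), then P(I = Ĩ ∈ C) ≥ |C|ε/(|C|ε + (N+1) − |C|). -/
open MeasureTheory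

/-- For a maximal coupling `(I, Ĩ)` of two categorical distributions with weights in
`[ω_*, ω^*]`, and `C` a set of indices where the weights agree,
`P(I = Ĩ ∈ C) ≥ |C|ε/(|C|ε + (N+1) − |C|)` with `ε = ω_*/ω^*`. -/
theorem maximal_coupling_coupled_set_lower {Ω : Type*} [MeasurableSpace Ω]
    (P : Measure Ω) [IsProbabilityMeasure P] (N : ℕ)
    (w wt : Fin (N + 1) → ℝ) (ωs ωS : ℝ) (h0 : 0 < ωs) (hle : ωs ≤ ωS)
    (hw : ∀ i, w i ∈ Set.Icc ωs ωS) (hwt : ∀ i, wt i ∈ Set.Icc ωs ωS)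
    (C : Finset (Fin (N + 1))) (hC : ∀ i ∈ C, w i = wt i)
    (I It : Ω → Fin (N + 1)) (hI : Measurable I) (hIt : Measurable It)
    (hmax : ∀ i, P {x | I x = i ∧ It x = i}
      = ENNReal.ofReal (min (w i / ∑ j, w j) (wt i / ∑ j, wt j))) :
    ENNReal.ofReal ((C.card * (ωs / ωS))
        / (C.card * (ωs / ωS) + ((N : ℝ) + 1) - C.card))
      ≤ P {x | I x = It x ∧ I x ∈ C} := by
  have hS0 : (0:ℝ) < ωS := lt_of_lt_of_le h0 hle
  set S := ∑ j, w j with hSdef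
  set St := ∑ j, wt j with hStdef
  have hSpos : 0 < S := Finset.sum_pos (fun j _ => lt_of_lt_of_le h0 (hw j).1) ⟨0, Finset.mem_univ 0⟩
  have hStpos : 0 < St := Finset.sum_pos (fun j _ => lt_of_lt_of_le h0 (hwt j).1) ⟨0, Finset.mem_univ 0⟩
  set M := max S St with hMdef
  have hMpos : 0 < M := lt_max_of_lt_left hSpos
  -- rewrite the event as a disjoint union
  have hset : {x | I x = It x ∧ I x ∈ C} = ⋃ i ∈ C, {x | I x = i ∧ It x = i} := by
    ext x
    simp only [Set.mem_setOf_eq, Set.mem_iUnion, exists_prop]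
    constructor
    · rintro ⟨heq, hmem⟩
      exact ⟨I x, hmem, rfl, heq.symm⟩
    · rintro ⟨i, hi, h1, h2⟩
      exact ⟨h1.trans h2.symm, h1 ▸ hi⟩
  have hdisj : (C : Set (Fin (N+1))).PairwiseDisjoint
      (fun i => {x | I x = i ∧ It x = i}) := by
    intro i _ j _ hij
    refine Set.disjoint_left.2 ?_
    rintro x ⟨h1, _⟩ ⟨h2, _⟩
    exact hij (h1.symm.trans h2)
  have hmeas : ∀ i ∈ C, MeasurableSet {x | I x = i ∧ It x = i} := by
    intro i _
    exact (hI (measurableSet_singleton i)).inter (hIt (measurableSet_singleton i))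
  have hPeq : P {x | I x = It x ∧ I x ∈ C}
      = ∑ i ∈ C, P {x | I x = i ∧ It x = i} := by
    rw [hset, measure_biUnion_finset hdisj hmeas]
  rw [hPeq]
  simp_rw [hmax]
  have hmin_nonneg : ∀ i ∈ C, 0 ≤ min (w i / S) (wt i / St) := by
    intro i _
    exact le_min (div_nonneg (le_of_lt (lt_of_lt_of_le h0 (hw i).1)) hSpos.le)
      (div_nonneg (le_of_lt (lt_of_lt_of_le h0 (hwt i).1)) hStpos.le)
  rw [← ENNReal.ofReal_sum_of_nonneg hmin_nonneg]
  apply ENNReal.ofReal_le_ofReal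
  -- each min equals w i / M for i ∈ C
  have hmin_eq : ∀ i ∈ C, min (w i / S) (wt i / St) = w i / M := by
    intro i hi
    have hwi : 0 ≤ w i := (le_of_lt (lt_of_lt_of_le h0 (hw i).1))
    rw [← hC i hi]
    rcases le_total S St with h | h
    · rw [hMdef, max_eq_right h, min_eq_right]
      gcongr
    · rw [hMdef, max_eq_left h, min_eq_left]
      gcongr
  rw [Finset.sum_congr rfl hmin_eq, ← Finset.sum_div]
  set A := ∑ i ∈ C, w i with hAdef
  set c := (C.card : ℝ) with hcdef
  have hcnn : 0 ≤ c := Nat.cast_nonneg _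
  have hcle : c ≤ (N:ℝ) + 1 := by
    rw [hcdef]
    have := Finset.card_le_univ C
    simp only [Finset.card_univ, Fintype.card_fin] at this
    exact_mod_cast this
  have hAge : c * ωs ≤ A := by
    calc c * ωs = ∑ _i ∈ C, ωs := by rw [Finset.sum_const, nsmul_eq_mul]
    _ ≤ A := Finset.sum_le_sum (fun i _ => (hw i).1)
  set b := (((N:ℝ) + 1) - c) * ωS with hbdef
  have hbn : 0 ≤ b := mul_nonneg (by linarith) hS0.le
  have hcompl : ∀ (v : Fin (N+1) → ℝ), (∀ i, v i ≤ ωS) →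
      ∑ i ∈ Cᶜ, v i ≤ b := by
    intro v hv
    calc ∑ i ∈ Cᶜ, v i ≤ ∑ _i ∈ Cᶜ, ωS := Finset.sum_le_sum (fun i _ => hv i)
    _ = (Cᶜ.card : ℝ) * ωS := by rw [Finset.sum_const, nsmul_eq_mul]
    _ = b := by
        rw [hbdef]
        congr 1
        rw [Finset.card_compl]
        simp only [Fintype.card_fin]
        rw [Nat.cast_sub (by simpa using Finset.card_le_univ C)]
        push_cast; ring
  have hMle : M ≤ A + b := by
    have hS : S ≤ A + b := by
      rw [hSdef, ← Finset.sum_add_sum_compl C w]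
      exact add_le_add_right (hcompl w (fun i => (hw i).2)) A
    have hSt : St ≤ A + b := by
      rw [hStdef, ← Finset.sum_add_sum_compl C wt]
      have : ∑ i ∈ C, wt i = A := (Finset.sum_congr rfl (fun i hi => (hC i hi).symm))
      rw [this]
      exact add_le_add_right (hcompl wt (fun i => (hwt i).2)) A
    exact max_le hS hSt
  have hden1 : 0 < c * ωs + b := by
    have : ((N:ℝ)+1) * ωs ≤ c * ωs + b := by
      rw [hbdef]
      nlinarith
    nlinarith
  have hAn : 0 ≤ A := le_trans (mul_nonneg hcnn h0.le) hAge
  have hden2 : 0 < A + b := by linarith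
  have key : c * ωs / (c * ωs + b) ≤ A / M := by
    calc c * ωs / (c * ωs + b) ≤ A / (A + b) := by
          rw [div_le_div_iff₀ hden1 hden2]
          nlinarith
    _ ≤ A / M := by gcongr
  have heq : c * (ωs / ωS) / (c * (ωs / ωS) + ((N : ℝ) + 1) - c)
      = c * ωs / (c * ωs + b) := by
    have h1 : c * (ωs / ωS) + ((N : ℝ) + 1) - c = (c * ωs + b) / ωS := by
      rw [hbdef]; field_simp; ring
    have h2 : c * (ωs / ωS) = (c * ωs) / ωS := by ring
    have hd3 : 0 < (c * ωs + b) / ωS := div_pos hden1 hS0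
    rw [h1, h2, div_eq_div_iff hd3.ne' hden1.ne']
    field_simp
  rw [heq]
  exact key
end

section
/- Let (A_k)_{k≥1} and (U_k)_{k≥1} be events adapted to a filtration (F_k) with A_k, U_k ∈ F_k, and suppose there are constants p ∈ (0,1] and q ∈ [0,1] such that almost surely: (a) on A_k, P(U_k | F_{k+1}) ≤ 1 − p (where F denotes the backward filtration, i.e. conditioning on the future σ-algebra F_{k+1} ⊇ σ(U_{k+1}, A_{k+1},…)), and (b) on A_k ∩ U_{k+1}^c, P(U_k | F_{k+1}) ≤ q. Then for any t ≥ 1 and horizon m ≥ t, P(U_t ∩ A_t ∩ ⋯ ∩ A_m) ≤ (1−p)^{m−t+1} + q/p. -/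
open MeasureTheory

private lemma key_step {Ω : Type*} (𝒢 : MeasurableSpace Ω) [m0 : MeasurableSpace Ω]
    (P : Measure Ω) [IsProbabilityMeasure P]
    (hle : 𝒢 ≤ m0)
    (Uk D C : Set Ω) (hUk : MeasurableSet[m0] Uk) (hC : MeasurableSet[𝒢] C)
    (c : ℝ) (hc : 0 ≤ c)
    (hcond : ∀ᵐ x ∂P, x ∈ D → (P[Uk.indicator (fun _ => (1:ℝ)) | 𝒢]) x ≤ c) :
    P (Uk ∩ D ∩ C) ≤ ENNReal.ofReal c * P C := by
  classical
  set f := P[Uk.indicator (fun _ => (1:ℝ)) | 𝒢] with hfdef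
  have hfm : StronglyMeasurable[𝒢] f := stronglyMeasurable_condExp
  set S : Set Ω := {x | f x ≤ c} with hSdef
  have hSmeas : MeasurableSet[𝒢] S := hfm.measurable measurableSet_Iic
  have hT : MeasurableSet[𝒢] (S ∩ C) := hSmeas.inter hC
  have hTm0 : MeasurableSet[m0] (S ∩ C) := hle _ hT
  have hint : Integrable (Uk.indicator (fun _ => (1:ℝ))) P :=
    (integrable_const (1:ℝ)).indicator hUk
  have hmono : P (Uk ∩ D ∩ C) ≤ P (Uk ∩ (S ∩ C)) := by
    apply measure_mono_ae
    filter_upwards [hcond] with x hx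
    rintro ⟨⟨hxU, hxD⟩, hxC⟩
    exact ⟨hxU, hx hxD, hxC⟩
  have heq : ∫ x in S ∩ C, Uk.indicator (fun _ => (1:ℝ)) x ∂P
      = (P (Uk ∩ (S ∩ C))).toReal := by
    rw [setIntegral_indicator hUk, setIntegral_const, smul_eq_mul, mul_one,
      Set.inter_comm (S ∩ C) Uk, measureReal_def]
  have h2 : ∫ x in S ∩ C, f x ∂P = ∫ x in S ∩ C, Uk.indicator (fun _ => (1:ℝ)) x ∂P :=
    setIntegral_condExp hle hint hT
  have h3 : ∫ x in S ∩ C, f x ∂P ≤ c * (P (S ∩ C)).toReal := by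
    calc ∫ x in S ∩ C, f x ∂P ≤ ∫ _x in S ∩ C, c ∂P :=
          setIntegral_mono_on integrable_condExp.integrableOn
            (integrable_const c).integrableOn hTm0 (fun x hx => hx.1)
      _ = (P (S ∩ C)).toReal * c := by rw [setIntegral_const, smul_eq_mul, measureReal_def]
      _ = c * (P (S ∩ C)).toReal := mul_comm _ _
  have hkey : (P (Uk ∩ (S ∩ C))).toReal ≤ c * (P (S ∩ C)).toReal := by
    rw [← heq, ← h2]; exact h3
  calc P (Uk ∩ D ∩ C) ≤ P (Uk ∩ (S ∩ C)) := hmono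
    _ = ENNReal.ofReal ((P (Uk ∩ (S ∩ C))).toReal) :=
        (ENNReal.ofReal_toReal (measure_ne_top _ _)).symm
    _ ≤ ENNReal.ofReal (c * (P (S ∩ C)).toReal) := ENNReal.ofReal_le_ofReal hkey
    _ = ENNReal.ofReal c * ENNReal.ofReal ((P (S ∩ C)).toReal) := ENNReal.ofReal_mul hc
    _ = ENNReal.ofReal c * P (S ∩ C) := by rw [ENNReal.ofReal_toReal (measure_ne_top _ _)]
    _ ≤ ENNReal.ofReal c * P C := mul_le_mul_right (measure_mono Set.inter_subset_right) _

/-- Abstract backward-sampling coupling bound: with a backward (decreasing) filtration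
`𝒢`, events `A_k, U_k ∈ 𝒢 k`, if on `A_k` we have `P(U_k | 𝒢_{k+1}) ≤ 1 − p` and on
`A_k ∩ U_{k+1}ᶜ` we have `P(U_k | 𝒢_{k+1}) ≤ q`, then
`P(U_t ∩ A_t ∩ ⋯ ∩ A_m) ≤ (1−p)^{m−t+1} + q/p`. -/
theorem backward_coupling_bound {Ω : Type*} [m0 : MeasurableSpace Ω]
    (P : Measure Ω) [IsProbabilityMeasure P]
    (𝒢 : ℕ → MeasurableSpace Ω) (hle : ∀ k, 𝒢 k ≤ m0)
    (hanti : ∀ k, 𝒢 (k + 1) ≤ 𝒢 k)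
    (A U : ℕ → Set Ω)
    (hA : ∀ k, MeasurableSet[𝒢 k] (A k)) (hU : ∀ k, MeasurableSet[𝒢 k] (U k))
    (p q : ℝ) (hp : p ∈ Set.Ioc (0 : ℝ) 1) (hq : q ∈ Set.Icc (0 : ℝ) 1)
    (ha : ∀ k : ℕ, ∀ᵐ x ∂P, x ∈ A k →
      (P[(U k).indicator (fun _ => (1 : ℝ)) | 𝒢 (k + 1)]) x ≤ 1 - p)
    (hb : ∀ k : ℕ, ∀ᵐ x ∂P, x ∈ A k ∩ (U (k + 1))ᶜ →
      (P[(U k).indicator (fun _ => (1 : ℝ)) | 𝒢 (k + 1)]) x ≤ q) :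
    ∀ t m : ℕ, 1 ≤ t → t ≤ m →
      P (U t ∩ ⋂ k ∈ Finset.Icc t m, A k)
        ≤ ENNReal.ofReal ((1 - p) ^ (m - t + 1) + q / p) := by
  classical
  intro t m ht htm
  obtain ⟨hp0, hp1⟩ := hp
  obtain ⟨hq0, hq1⟩ := hq
  have hr0 : (0:ℝ) ≤ 1 - p := by linarith
  have hanti' : Antitone 𝒢 := antitone_nat_of_succ_le hanti
  -- Chain using (a): all `U` and `A` from `j` to `m`.
  have chainA : ∀ n j : ℕ, m + 1 = j + n →
      P (⋂ k ∈ Finset.Icc j m, (U k ∩ A k)) ≤ ENNReal.ofReal ((1 - p) ^ n) := by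
    intro n
    induction n with
    | zero =>
      intro j hj
      have h : Finset.Icc j m = ∅ := Finset.Icc_eq_empty (by omega)
      simp [h]
    | succ n ih =>
      intro j hj
      have hjm : j ≤ m := by omega
      have hIcc : Finset.Icc j m = insert j (Finset.Icc (j+1) m) := by
        ext k; simp only [Finset.mem_Icc, Finset.mem_insert]; omega
      have hC : MeasurableSet[𝒢 (j+1)] (⋂ k ∈ Finset.Icc (j+1) m, (U k ∩ A k)) :=
        Finset.measurableSet_biInter _ (fun k hk =>
          hanti' (Finset.mem_Icc.mp hk).1 _ ((hU k).inter (hA k)))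
      rw [hIcc, Finset.set_biInter_insert]
      calc P ((U j ∩ A j) ∩ ⋂ k ∈ Finset.Icc (j+1) m, (U k ∩ A k))
          ≤ ENNReal.ofReal (1 - p) * P (⋂ k ∈ Finset.Icc (j+1) m, (U k ∩ A k)) :=
            key_step (𝒢 (j+1)) P (hle _) (U j) (A j) _ (hle j _ (hU j)) hC (1 - p) hr0 (ha j)
        _ ≤ ENNReal.ofReal (1 - p) * ENNReal.ofReal ((1 - p) ^ n) :=
            mul_le_mul_right (ih (j+1) (by omega)) _
        _ = ENNReal.ofReal ((1 - p) ^ (n+1)) := by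
            rw [← ENNReal.ofReal_mul hr0, pow_succ']
  -- Chain using (b): `U,A` from `i` to `i+n`, then a failure `Uᶜ` at `i+n+1`.
  have chainB : ∀ n i : ℕ, i + n + 1 ≤ m →
      P ((⋂ k ∈ Finset.Icc i (i+n), (U k ∩ A k)) ∩ (U (i+n+1))ᶜ)
        ≤ ENNReal.ofReal ((1 - p) ^ n * q) := by
    intro n
    induction n with
    | zero =>
      intro i him
      have hset : (⋂ k ∈ Finset.Icc i (i+0), (U k ∩ A k)) ∩ (U (i+0+1))ᶜ
          = U i ∩ (A i ∩ (U (i+1))ᶜ) ∩ (U (i+1))ᶜ := by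
        simp only [Nat.add_zero, Finset.Icc_self, Finset.set_biInter_singleton]
        ext x; simp only [Set.mem_inter_iff, Set.mem_compl_iff]; tauto
      rw [hset]
      calc P (U i ∩ (A i ∩ (U (i+1))ᶜ) ∩ (U (i+1))ᶜ)
          ≤ ENNReal.ofReal q * P ((U (i+1))ᶜ) :=
            key_step (𝒢 (i+1)) P (hle _) (U i) _ _ (hle i _ (hU i))
              (hU (i+1)).compl q hq0 (hb i)
        _ ≤ ENNReal.ofReal q * 1 := mul_le_mul_right prob_le_one _
        _ = ENNReal.ofReal ((1-p)^0 * q) := by rw [mul_one, pow_zero, one_mul]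
    | succ n ih =>
      intro i him
      have hIcc : Finset.Icc i (i+(n+1)) = insert i (Finset.Icc (i+1) (i+n+1)) := by
        ext k; simp only [Finset.mem_Icc, Finset.mem_insert]; omega
      have hC : MeasurableSet[𝒢 (i+1)]
          ((⋂ k ∈ Finset.Icc (i+1) (i+n+1), (U k ∩ A k)) ∩ (U (i+n+2))ᶜ) := by
        refine MeasurableSet.inter ?_ ?_
        · exact Finset.measurableSet_biInter _ (fun k hk =>
            hanti' (Finset.mem_Icc.mp hk).1 _ ((hU k).inter (hA k)))
        · exact hanti' (by omega) _ (hU (i+n+2)).compl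
      have hset : (⋂ k ∈ Finset.Icc i (i+(n+1)), (U k ∩ A k)) ∩ (U (i+(n+1)+1))ᶜ
          = (U i ∩ A i) ∩
            ((⋂ k ∈ Finset.Icc (i+1) (i+n+1), (U k ∩ A k)) ∩ (U (i+n+2))ᶜ) := by
        rw [hIcc, Finset.set_biInter_insert, Set.inter_assoc,
          show i + (n+1) + 1 = i + n + 2 by omega]
      rw [hset]
      have harith2 : i + 1 + n + 1 = i + n + 2 := by omega
      have harith1 : i + 1 + n = i + n + 1 := by omega
      have hih := ih (i+1) (by omega)
      rw [harith2, harith1] at hih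
      calc P ((U i ∩ A i) ∩
            ((⋂ k ∈ Finset.Icc (i+1) (i+n+1), (U k ∩ A k)) ∩ (U (i+n+2))ᶜ))
          ≤ ENNReal.ofReal (1 - p) *
            P ((⋂ k ∈ Finset.Icc (i+1) (i+n+1), (U k ∩ A k)) ∩ (U (i+n+2))ᶜ) :=
            key_step (𝒢 (i+1)) P (hle _) (U i) (A i) _ (hle i _ (hU i)) hC (1 - p) hr0 (ha i)
        _ ≤ ENNReal.ofReal (1 - p) * ENNReal.ofReal ((1 - p) ^ n * q) :=
            mul_le_mul_right hih _
        _ = ENNReal.ofReal ((1 - p) ^ (n+1) * q) := by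
            rw [← ENNReal.ofReal_mul hr0, pow_succ']; ring_nf
  -- Decomposition by the first failure of `U`.
  have hdecomp : U t ∩ ⋂ k ∈ Finset.Icc t m, A k ⊆
      (⋂ k ∈ Finset.Icc t m, (U k ∩ A k)) ∪
        ⋃ n ∈ Finset.range (m - t),
          ((⋂ k ∈ Finset.Icc t (t+n), (U k ∩ A k)) ∩ (U (t+n+1))ᶜ) := by
    intro x hx
    obtain ⟨hxU, hxA⟩ := hx
    simp only [Set.mem_iInter, Finset.mem_Icc] at hxA
    by_cases hall : ∀ k, t ≤ k ∧ k ≤ m → x ∈ U k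
    · left
      simp only [Set.mem_iInter, Finset.mem_Icc, Set.mem_inter_iff]
      exact fun k hk => ⟨hall k hk, hxA k hk⟩
    · right
      push_neg at hall
      obtain ⟨k0, hk0, hk3⟩ := hall
      have hex : ∃ k, (t ≤ k ∧ k ≤ m) ∧ x ∉ U k := ⟨k0, hk0, hk3⟩
      set j := Nat.find hex with hjdef
      have hjspec : (t ≤ j ∧ j ≤ m) ∧ x ∉ U j := Nat.find_spec hex
      have hjmin : ∀ k < j, ¬ ((t ≤ k ∧ k ≤ m) ∧ x ∉ U k) := fun k hk => Nat.find_min hex hk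
      have hjm : j ≤ m := hjspec.1.2
      have hjt : t < j := by
        rcases lt_or_eq_of_le hjspec.1.1 with h | h
        · exact h
        · exact absurd (h ▸ hxU) hjspec.2
      refine Set.mem_iUnion₂.mpr ⟨j - t - 1, ?_, ?_, ?_⟩
      · simp only [Finset.mem_range]; omega
      · simp only [Set.mem_iInter, Finset.mem_Icc, Set.mem_inter_iff]
        intro k hk
        have hkm : k ≤ m := by omega
        refine ⟨?_, hxA k ⟨by omega, hkm⟩⟩
        by_contra hxk
        exact hjmin k (by omega) ⟨⟨by omega, hkm⟩, hxk⟩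
      · have hjj : t + (j - t - 1) + 1 = j := by omega
        rw [hjj]
        exact hjspec.2
  -- Geometric sum bound.
  have hsum : ∀ N : ℕ, ∑ n ∈ Finset.range N, (1-p)^n * q ≤ q / p := by
    intro N
    have hne : (1 - p) ≠ 1 := by intro h; linarith
    have hpow : 0 ≤ (1-p)^N := pow_nonneg hr0 N
    have hgeom : ∑ n ∈ Finset.range N, (1-p)^n ≤ 1 / p := by
      calc ∑ n ∈ Finset.range N, (1-p)^n = ((1-p)^N - 1)/((1-p)-1) := geom_sum_eq hne N
        _ = (1 - (1-p)^N)/p := by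
            rw [show (1-p)-1 = -p by ring, div_neg, ← neg_div, neg_sub]
        _ ≤ 1/p := by gcongr; linarith
    calc ∑ n ∈ Finset.range N, (1-p)^n * q
        = (∑ n ∈ Finset.range N, (1-p)^n) * q := by rw [Finset.sum_mul]
      _ ≤ (1/p) * q := mul_le_mul_of_nonneg_right hgeom hq0
      _ = q / p := by ring
  -- Put everything together.
  calc P (U t ∩ ⋂ k ∈ Finset.Icc t m, A k)
      ≤ P ((⋂ k ∈ Finset.Icc t m, (U k ∩ A k)) ∪
          ⋃ n ∈ Finset.range (m - t),
            ((⋂ k ∈ Finset.Icc t (t+n), (U k ∩ A k)) ∩ (U (t+n+1))ᶜ)) :=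
        measure_mono hdecomp
    _ ≤ P (⋂ k ∈ Finset.Icc t m, (U k ∩ A k)) +
        P (⋃ n ∈ Finset.range (m - t),
          ((⋂ k ∈ Finset.Icc t (t+n), (U k ∩ A k)) ∩ (U (t+n+1))ᶜ)) :=
        measure_union_le _ _
    _ ≤ ENNReal.ofReal ((1-p)^(m-t+1)) +
        ∑ n ∈ Finset.range (m-t), ENNReal.ofReal ((1-p)^n * q) := by
        refine add_le_add (chainA (m-t+1) t (by omega)) ?_
        refine le_trans (measure_biUnion_finset_le _ _)
          (Finset.sum_le_sum fun n hn => chainB n t ?_)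
        simp only [Finset.mem_range] at hn; omega
    _ = ENNReal.ofReal ((1-p)^(m-t+1) + ∑ n ∈ Finset.range (m-t), (1-p)^n * q) := by
        rw [← ENNReal.ofReal_sum_of_nonneg (fun n _ => mul_nonneg (pow_nonneg hr0 n) hq0),
          ← ENNReal.ofReal_add (pow_nonneg hr0 _)
            (Finset.sum_nonneg fun n _ => mul_nonneg (pow_nonneg hr0 n) hq0)]
    _ ≤ ENNReal.ofReal ((1-p)^(m-t+1) + q/p) :=
        ENNReal.ofReal_le_ofReal (by linarith [hsum (m-t)])
end
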